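/- arXiv:2403.17946 — 3 statements merged into one kernel-verified Lean document; each statement's English description precedes it below -/
import Mathlib

section
/- Let A, B : X → X be bounded linear operators on a Banach space X, x ∈ X, and f ∈ X* with f(x) = 1. Then ∇(f,A,x)·Δ(B,x,f) ≥ |f(A(B(x))) − f(A(x))·f(B(x))|, where Δ(B,x,f) := ‖Bx − f(Bx)x‖ and ∇(f,A,x) := ‖f∘A − f(Ax)·f‖ is the operator norm of the functional u ↦ f(Au) − f(Ax)f(u). -/
theorem stmt5 {X : Type*} [NormedAddCommGroup X] [NormedSpace ℂ X] [CompleteSpace X]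
    (A B : X →L[ℂ] X) (x : X) (f : X →L[ℂ] ℂ) (hfx : f x = 1) :
    ‖f.comp A - f (A x) • f‖ * ‖B x - f (B x) • x‖ ≥
      ‖f (A (B x)) - f (A x) * f (B x)‖ := by
  have h := (f.comp A - f (A x) • f).le_opNorm (B x - f (B x) • x)
  have hval : (f.comp A - f (A x) • f) (B x - f (B x) • x)
      = f (A (B x)) - f (A x) * f (B x) := by
    simp [hfx, map_smul]
    ring
  rw [hval] at h
  simpa using h
end

section
/- Let A, B : X → X be bounded linear operators on a Banach space X, x ∈ X, f ∈ X* with f(x) = 1. Then ∇(f,A,x)·Δ(B,x,f) + ‖f∘B‖·Δ(A,x,f) ≥ |f([A,B]x)| where [A,B] = AB − BA, Δ(A,x,f) := ‖Ax − f(Ax)x‖, Δ(B,x,f) := ‖Bx − f(Bx)x‖, and ∇(f,A,x) := ‖f∘A − f(Ax)f‖ (operator norm). -/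
theorem stmt6 {X : Type*} [NormedAddCommGroup X] [NormedSpace ℂ X] [CompleteSpace X]
    (A B : X →L[ℂ] X) (x : X) (f : X →L[ℂ] ℂ) (hfx : f x = 1) :
    ‖f.comp A - f (A x) • f‖ * ‖B x - f (B x) • x‖ +
      ‖f.comp B‖ * ‖A x - f (A x) • x‖ ≥
      ‖f (A (B x) - B (A x))‖ := by
  set g := f.comp A - f (A x) • f with hg
  set u := B x - f (B x) • x with hu
  set v := A x - f (A x) • x with hv
  have key : f (A (B x) - B (A x)) = g u - (f.comp B) v := by
    simp only [hg, hu, hv, ContinuousLinearMap.sub_apply, ContinuousLinearMap.smul_apply,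
      ContinuousLinearMap.comp_apply, map_sub, map_smul, hfx, smul_eq_mul, mul_one]
    ring
  rw [ge_iff_le, key]
  calc ‖g u - (f.comp B) v‖ ≤ ‖g u‖ + ‖(f.comp B) v‖ := norm_sub_le _ _
    _ ≤ ‖g‖ * ‖u‖ + ‖f.comp B‖ * ‖v‖ :=
      add_le_add (g.le_opNorm u) ((f.comp B).le_opNorm v)
end

section
/- Let A, B : X → X be bounded linear operators on a Banach space X, x ∈ X, f ∈ X* with f(x) = 1. Then ∇(f,A,x)·Δ(B,x,f) + ‖f∘B‖·‖Ax + f(Ax)x‖ ≥ |f((AB + BA)x)|, where Δ(B,x,f) := ‖Bx − f(Bx)x‖ and ∇(f,A,x) := ‖f∘A − f(Ax)f‖. -/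
theorem stmt7 {X : Type*} [NormedAddCommGroup X] [NormedSpace ℂ X] [CompleteSpace X]
    (A B : X →L[ℂ] X) (x : X) (f : X →L[ℂ] ℂ) (hfx : f x = 1) :
    ‖f.comp A - f (A x) • f‖ * ‖B x - f (B x) • x‖ +
      ‖f.comp B‖ * ‖A x + f (A x) • x‖ ≥
      ‖f (A (B x) + B (A x))‖ := by
  have key : f (A (B x) + B (A x)) =
      (f.comp A - f (A x) • f) (B x - f (B x) • x) +
        (f.comp B) (A x + f (A x) • x) := by
    simp [map_add, map_sub, map_smul, hfx]
  have h1 : ‖(f.comp A - f (A x) • f) (B x - f (B x) • x)‖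
      ≤ ‖f.comp A - f (A x) • f‖ * ‖B x - f (B x) • x‖ := by
    simpa using (f.comp A - f (A x) • f).le_opNorm (B x - f (B x) • x)
  have h2 : ‖(f.comp B) (A x + f (A x) • x)‖
      ≤ ‖f.comp B‖ * ‖A x + f (A x) • x‖ := by
    simpa using (f.comp B).le_opNorm (A x + f (A x) • x)
  calc ‖f (A (B x) + B (A x))‖
      ≤ ‖(f.comp A - f (A x) • f) (B x - f (B x) • x)‖ +
        ‖(f.comp B) (A x + f (A x) • x)‖ := by
        rw [key]; exact norm_add_le _ _
    _ ≤ _ := add_le_add h1 h2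
end
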